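/- For F strictly convex with continuous second derivative on Θ, θ ∈ Θ, Δ > 0 and θ_Δ := μ⁻¹(μ(θ)+Δ) > θ (μ strictly increasing), the ratio K(θ,θ')/|θ−θ'| is bounded below on Θ_{θ,Δ} = {θ' : θ' ≥ θ_Δ} by the positive constant (F(θ_Δ) − F(θ))/(θ_Δ − θ) − F'(θ). In particular for every θ' ∈ Θ_{θ,Δ}, K(θ,θ') − δ|θ−θ'| ≥ (1 − δ·C)·K(θ,θ') where C = ((F(θ_Δ)−F(θ))/(θ_Δ−θ) − F'(θ))⁻¹. -/
import Mathlib


open Real Set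

/-- For `F` strictly convex with continuous second derivative, `θΔ > θ`, the ratio
`K(θ,θ')/|θ-θ'|` is bounded below on `{θ' : θ' ≥ θΔ}` by the positive constant
`C⁻¹ = (F(θΔ)-F(θ))/(θΔ-θ) - F'(θ)`, and consequently
`K(θ,θ') - δ|θ-θ'| ≥ (1 - δ C) K(θ,θ')` there. -/
theorem kl_ratio_lower_bound_on_level_set
    (Θ : Set ℝ) (hΘ : IsOpen Θ) (hconn : Θ.OrdConnected)
    (F : ℝ → ℝ) (hF : ContDiffOn ℝ 2 F Θ) (hconv : StrictConvexOn ℝ Θ F)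
    (K : ℝ → ℝ → ℝ)
    (hK : ∀ t t', K t t' = F t' - F t - deriv F t * (t' - t))
    (θ θΔ : ℝ) (hθ : θ ∈ Θ) (hθΔ : θΔ ∈ Θ) (hlt : θ < θΔ)
    (C : ℝ) (hC : C = ((F θΔ - F θ) / (θΔ - θ) - deriv F θ)⁻¹)
    (δ : ℝ) (hδ : 0 < δ) (hδC : 1 - δ * C > 0) :
    0 < (F θΔ - F θ) / (θΔ - θ) - deriv F θ ∧
    ∀ θ' ∈ Θ, θΔ ≤ θ' →
      (F θΔ - F θ) / (θΔ - θ) - deriv F θ ≤ K θ θ' / |θ - θ'| ∧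
      (1 - δ * C) * K θ θ' ≤ K θ θ' - δ * |θ - θ'| := by
  have hdiff : DifferentiableAt ℝ F θ :=
    ((hF.differentiableOn (by norm_num)).differentiableAt (hΘ.mem_nhds hθ))
  have hpos : 0 < (F θΔ - F θ) / (θΔ - θ) - deriv F θ := by
    have h := hconv.deriv_lt_slope hθ hθΔ hlt hdiff
    rw [slope_def_field] at h
    linarith
  refine ⟨hpos, fun θ' hθ' hle => ?_⟩
  have hlt' : θ < θ' := lt_of_lt_of_le hlt hle
  have habs : |θ - θ'| = θ' - θ := by
    rw [abs_sub_comm, abs_of_pos (by linarith)]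
  have hslope : (F θΔ - F θ) / (θΔ - θ) ≤ (F θ' - F θ) / (θ' - θ) := by
    rcases eq_or_lt_of_le hle with rfl | hlt2
    · exact le_refl _
    · have := hconv.convexOn.slope_mono hθ
        (Set.mem_diff_singleton.mpr ⟨hθΔ, hlt.ne'⟩)
        (Set.mem_diff_singleton.mpr ⟨hθ', hlt'.ne'⟩) hle
      rwa [slope_def_field, slope_def_field] at this
  have hKval : K θ θ' = F θ' - F θ - deriv F θ * (θ' - θ) := hK θ θ'
  have hratio : (F θΔ - F θ) / (θΔ - θ) - deriv F θ ≤ K θ θ' / |θ - θ'| := by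
    rw [habs, hKval]
    have h1 : (F θ' - F θ - deriv F θ * (θ' - θ)) / (θ' - θ)
        = (F θ' - F θ) / (θ' - θ) - deriv F θ := by
      have hne : θ' - θ ≠ 0 := ne_of_gt (by linarith)
      rw [sub_div, mul_div_assoc, div_self hne, mul_one]
    rw [h1]
    linarith
  refine ⟨hratio, ?_⟩
  -- Second inequality: reduces to C * K ≥ |θ - θ'|
  have hCpos : 0 < C := by rw [hC]; exact inv_pos.mpr hpos
  have habspos : 0 < |θ - θ'| := by rw [habs]; linarith
  have hKge : C⁻¹ * |θ - θ'| ≤ K θ θ' := by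
    rw [hC, inv_inv]
    calc ((F θΔ - F θ) / (θΔ - θ) - deriv F θ) * |θ - θ'|
        ≤ K θ θ' / |θ - θ'| * |θ - θ'| := mul_le_mul_of_nonneg_right hratio habspos.le
      _ = K θ θ' := div_mul_cancel₀ _ habspos.ne'
  have hCK : |θ - θ'| ≤ C * K θ θ' := by
    have := mul_le_mul_of_nonneg_left hKge hCpos.le
    rwa [← mul_assoc, mul_inv_cancel₀ hCpos.ne', one_mul] at this
  nlinarith [mul_le_mul_of_nonneg_left hCK hδ.le]
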